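/- For every k < i and all sufficiently large n there exists a function h from the i-element-plus-one subsets of {0,…,n} (i.e., (i+1)-subsets, 'i-simplices') to the (k+1)-subsets ('k-simplices') such that (1) h(τ) ⊆ τ for every i-simplex τ, and (2) |h^{-1}(σ)| ≥ C(n−k, i−k) / (2·C(i+1, k+1)) for every k-simplex σ. -/

import Mathlib

open Finset
-- helper 1
lemma choose_ge_aux (a r : ℕ) : a + 1 ≤ (r + 1 + a).choose (r + 1) := by
  induction r with
  | zero => simp [Nat.choose_one_right, Nat.add_comm]
  | succ r ih =>
    have h : (r + 1 + 1 + a) = (r + 1 + a) + 1 := by ring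
    rw [h, Nat.choose_succ_succ]
    exact le_trans ih (Nat.le_add_right _ _)

-- helper 2: card of supersets
lemma card_supersets {n k i : ℕ} (hki : k ≤ i) (hin : i ≤ n) (σ : Finset (Fin (n+1)))
    (hσ : σ.card = k+1) :
    (univ.filter (fun τ : Finset (Fin (n+1)) => τ.card = i+1 ∧ σ ⊆ τ)).card
      = (n-k).choose (i-k) := by
  have hcompl : σᶜ.card = n - k := by
    rw [card_compl, hσ]
    simp only [Fintype.card_fin]
    omega
  rw [← hcompl, ← Finset.card_powersetCard]
  apply Finset.card_bij' (fun τ _ => τ \ σ) (fun s _ => s ∪ σ)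
  · intro τ hτ
    simp only [mem_filter, mem_univ, true_and] at hτ
    rw [Finset.mem_powersetCard]
    constructor
    · exact fun x hx => by
        simp only [Finset.mem_compl]
        exact fun hxσ => (Finset.mem_sdiff.mp hx).2 hxσ
    · rw [Finset.card_sdiff_of_subset hτ.2, hτ.1, hσ]; omega
  · intro s hs
    rw [Finset.mem_powersetCard] at hs
    have hd : Disjoint s σ := by
      rw [Finset.disjoint_left]
      intro x hx hxσ
      exact (Finset.mem_compl.mp (hs.1 hx)) hxσ
    simp only [mem_filter, mem_univ, true_and]
    constructor
    · rw [Finset.card_union_of_disjoint hd, hs.2, hσ]; omega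
    · exact Finset.subset_union_right
  · intro τ hτ
    simp only [mem_filter, mem_univ, true_and] at hτ
    exact Finset.sdiff_union_of_subset hτ.2
  · intro s hs
    rw [Finset.mem_powersetCard] at hs
    have hd : Disjoint s σ := by
      rw [Finset.disjoint_left]
      intro x hx hxσ
      exact (Finset.mem_compl.mp (hs.1 hx)) hxσ
    exact Finset.union_sdiff_cancel_right hd

noncomputable def pickFace {n k t : ℕ}
    (f : ({σ : Finset (Fin (n+1)) // σ.card = k+1} × Fin t) → Finset (Fin (n+1)))
    (τ : Finset (Fin (n+1))) : Finset (Fin (n+1)) :=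
  if hp : ∃ p, f p = τ then hp.choose.1.1
  else if hc : k + 1 ≤ τ.card then (Finset.exists_subset_card_eq hc).choose
  else ∅

lemma pickFace_eq {n k t : ℕ}
    (f : ({σ : Finset (Fin (n+1)) // σ.card = k+1} × Fin t) → Finset (Fin (n+1)))
    (hfinj : Function.Injective f) (p) : pickFace f (f p) = p.1.1 := by
  have hp : ∃ q, f q = f p := ⟨p, rfl⟩
  rw [pickFace, dif_pos hp, hfinj hp.choose_spec]

lemma pickFace_sub {n k i t : ℕ} (hk : k < i)
    (f : ({σ : Finset (Fin (n+1)) // σ.card = k+1} × Fin t) → Finset (Fin (n+1)))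
    (hf : ∀ p, (f p).card = i+1 ∧ p.1.1 ⊆ f p)
    (τ : Finset (Fin (n+1))) (hτ : τ.card = i+1) :
    pickFace f τ ⊆ τ ∧ (pickFace f τ).card = k+1 := by
  rw [pickFace]; split_ifs with hp hc
  · have hspec := hp.choose_spec
    refine ⟨?_, hp.choose.1.2⟩
    calc (hp.choose.1 : Finset (Fin (n+1))) ⊆ f hp.choose := (hf hp.choose).2
      _ = τ := hspec
  · exact (Finset.exists_subset_card_eq hc).choose_spec
  · exact absurd hτ (by omega)

/-- For every `k < i` and all sufficiently large `n` there exists a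
function `h` from the `i`-simplices ((i+1)-subsets) of `{0,…,n}` to the `k`-simplices
((k+1)-subsets) such that `h(τ) ⊆ τ` for every `i`-simplex `τ`, and
`|h⁻¹(σ)| ≥ C(n−k, i−k) / (2·C(i+1, k+1))` for every `k`-simplex `σ`. -/
theorem exists_face_choice_function (k i : ℕ) (hki : k < i) :
    ∃ n₀ : ℕ, ∀ n ≥ n₀,
      ∃ h : Finset (Fin (n + 1)) → Finset (Fin (n + 1)),
        (∀ τ : Finset (Fin (n + 1)), τ.card = i + 1 → h τ ⊆ τ ∧ (h τ).card = k + 1) ∧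
        (∀ σ : Finset (Fin (n + 1)), σ.card = k + 1 →
          ((n - k).choose (i - k) : ℝ) / (2 * ((i + 1).choose (k + 1) : ℝ)) ≤
            ((univ.filter (fun τ : Finset (Fin (n + 1)) =>
              τ.card = i + 1 ∧ h τ = σ)).card : ℝ)) := by
  classical
  set M := (i+1).choose (k+1) with hM
  have hMpos : 0 < M := Nat.choose_pos (by omega)
  refine ⟨i + 2 * M + 1, fun n hn => ?_⟩
  set D := (n - k).choose (i - k) with hDdef
  have hD_ge : 2 * M ≤ D := by
    have h1 := choose_ge_aux (n - i) (i - k - 1)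
    have h2 : (i - k - 1) + 1 = i - k := by omega
    rw [h2] at h1
    have h3 : i - k + (n - i) = n - k := by omega
    rw [h3] at h1
    omega
  set q := D / (2 * M) with hq
  set t := q + 1 with ht
  have hdm := Nat.div_mul_le_self D (2 * M)
  rw [← hq] at hdm
  have htM : t * M ≤ D := by
    have h5 : t * M = q * M + M := by rw [ht]; ring
    have h6 : 2 * (q * M) = q * (2 * M) := by ring
    omega
  have hDt : D < t * (2 * M) := by
    have h6 := Nat.div_add_mod D (2 * M)
    rw [← hq] at h6
    have h7 : D % (2 * M) < 2 * M := Nat.mod_lt _ (by omega)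
    have h8 : t * (2 * M) = 2 * M * q + 2 * M := by rw [ht]; ring
    omega
  -- Hall's theorem setup
  set T : ({σ : Finset (Fin (n+1)) // σ.card = k+1} × Fin t) → Finset (Finset (Fin (n+1))) :=
    fun p => univ.filter (fun τ => τ.card = i + 1 ∧ p.1.1 ⊆ τ) with hT
  have hall : ∀ s : Finset ({σ : Finset (Fin (n+1)) // σ.card = k+1} × Fin t),
      s.card ≤ (s.biUnion T).card := by
    intro s
    set B := s.biUnion T with hB
    set P : Finset (Finset (Fin (n+1))) := s.image (fun p => p.1.1) with hP
    have hPcard : ∀ σ ∈ P, σ.card = k + 1 := by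
      intro σ hσ
      obtain ⟨p, _, rfl⟩ := Finset.mem_image.mp hσ
      exact p.1.2
    have hBcard : ∀ τ ∈ B, τ.card = i + 1 := by
      intro τ hτ
      obtain ⟨p, _, hτ2⟩ := Finset.mem_biUnion.mp hτ
      exact (Finset.mem_filter.mp hτ2).2.1
    have hs_le : s.card ≤ P.card * t := by
      have hinj : Set.InjOn (fun p : {σ : Finset (Fin (n+1)) // σ.card = k+1} × Fin t =>
          (p.1.1, p.2)) s := by
        intro p _ r _ hpr
        obtain ⟨h1, h2⟩ := Prod.ext_iff.mp hpr
        exact Prod.ext (Subtype.ext h1) h2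
      have := Finset.card_le_card_of_injOn
        (fun p : {σ : Finset (Fin (n+1)) // σ.card = k+1} × Fin t => (p.1.1, p.2))
        (fun p hp => Finset.mem_product.mpr
          ⟨Finset.mem_image_of_mem
            (fun r : {σ : Finset (Fin (n+1)) // σ.card = k+1} × Fin t => r.1.1) hp,
           Finset.mem_univ p.2⟩) hinj
      simpa [Finset.card_product] using this
    have hfiber : ∀ σ ∈ P, (B.filter (fun τ => σ ⊆ τ)).card = D := by
      intro σ hσ
      obtain ⟨p, hp, rfl⟩ := Finset.mem_image.mp hσ
      have heq : B.filter (fun τ => p.1.1 ⊆ τ)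
          = univ.filter (fun τ => τ.card = i + 1 ∧ p.1.1 ⊆ τ) := by
        ext τ
        simp only [Finset.mem_filter, Finset.mem_univ, true_and]
        constructor
        · rintro ⟨hτB, hsub⟩
          exact ⟨hBcard τ hτB, hsub⟩
        · rintro ⟨hc, hsub⟩
          refine ⟨Finset.mem_biUnion.mpr ⟨p, hp, ?_⟩, hsub⟩
          simp only [hT, Finset.mem_filter, Finset.mem_univ, true_and]
          exact ⟨hc, hsub⟩
      rw [heq, hDdef]
      exact card_supersets (le_of_lt hki) (by omega) _ p.1.2
    have hPD : P.card * D ≤ B.card * M := by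
      have hswap : ∑ σ ∈ P, (B.filter (fun τ => σ ⊆ τ)).card
          = ∑ τ ∈ B, (P.filter (fun σ => σ ⊆ τ)).card := by
        simp only [Finset.card_filter]
        exact Finset.sum_comm
      have hface : ∀ τ ∈ B, (P.filter (fun σ => σ ⊆ τ)).card ≤ M := by
        intro τ hτ
        have : P.filter (fun σ => σ ⊆ τ) ⊆ τ.powersetCard (k + 1) := by
          intro σ hσ
          obtain ⟨hσP, hsub⟩ := Finset.mem_filter.mp hσ
          exact Finset.mem_powersetCard.mpr ⟨hsub, hPcard σ hσP⟩
        calc (P.filter (fun σ => σ ⊆ τ)).card ≤ (τ.powersetCard (k + 1)).card :=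
              Finset.card_le_card this
          _ = M := by rw [Finset.card_powersetCard, hBcard τ hτ]
      calc P.card * D = ∑ _σ ∈ P, D := by rw [Finset.sum_const, smul_eq_mul]
        _ = ∑ σ ∈ P, (B.filter (fun τ => σ ⊆ τ)).card := by
            exact (Finset.sum_congr rfl hfiber).symm
        _ = ∑ τ ∈ B, (P.filter (fun σ => σ ⊆ τ)).card := hswap
        _ ≤ ∑ _τ ∈ B, M := Finset.sum_le_sum hface
        _ = B.card * M := by rw [Finset.sum_const, smul_eq_mul]
    have hfinal : P.card * t ≤ B.card := by
      have h9 : (P.card * t) * M ≤ B.card * M := by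
        calc (P.card * t) * M = P.card * (t * M) := by ring
          _ ≤ P.card * D := Nat.mul_le_mul_left _ htM
          _ ≤ B.card * M := hPD
      exact Nat.le_of_mul_le_mul_right h9 hMpos
    exact le_trans hs_le hfinal
  obtain ⟨f, hfinj, hfmem⟩ := (Finset.all_card_le_biUnion_card_iff_exists_injective T).mp hall
  have hf : ∀ p, (f p).card = i + 1 ∧ p.1.1 ⊆ f p := by
    intro p
    have := hfmem p
    simp only [hT, Finset.mem_filter, Finset.mem_univ, true_and] at this
    exact this
  refine ⟨pickFace f, fun τ hτ => pickFace_sub hki f hf τ hτ, fun σ hσ => ?_⟩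
  have hmem : ∀ j : Fin t, f (⟨σ, hσ⟩, j) ∈ univ.filter
      (fun τ : Finset (Fin (n+1)) => τ.card = i + 1 ∧ pickFace f τ = σ) := by
    intro j
    refine Finset.mem_filter.mpr ⟨Finset.mem_univ _, (hf _).1, ?_⟩
    rw [pickFace_eq f hfinj]
  have hcard : t ≤ (univ.filter (fun τ : Finset (Fin (n+1)) =>
      τ.card = i + 1 ∧ pickFace f τ = σ)).card := by
    have hinj : Set.InjOn (fun j : Fin t => f (⟨σ, hσ⟩, j)) ↑(univ : Finset (Fin t)) := by
      intro a _ b _ hab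
      have := hfinj hab
      exact (Prod.ext_iff.mp this).2
    have := Finset.card_le_card_of_injOn (fun j : Fin t => f (⟨σ, hσ⟩, j))
      (fun j _ => hmem j) hinj
    simpa using this
  rw [div_le_iff₀ (by positivity)]
  have hnat : D ≤ (univ.filter (fun τ : Finset (Fin (n+1)) =>
      τ.card = i + 1 ∧ pickFace f τ = σ)).card * (2 * M) :=
    le_trans (le_of_lt hDt) (Nat.mul_le_mul_right _ hcard)
  calc ((n - k).choose (i - k) : ℝ) = (D : ℝ) := by rw [hDdef]
    _ ≤ ((univ.filter (fun τ : Finset (Fin (n+1)) =>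
          τ.card = i + 1 ∧ pickFace f τ = σ)).card * (2 * M) : ℕ) := by exact_mod_cast hnat
    _ = _ := by push_cast [hM]; ring
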